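/- For integers k ≥ 1 and n ≥ 0, the L²(0,1) norm squared of g_n^{(k)} − 1 equals k^{2(n+1)} (2n)! / ((n!)^2 (2k−1)^{2n+1}) − 1, i.e., ∫_0^1 (g_n^{(k)}(x) − 1)^2 dx = k^{2(n+1)}(2n)!/((n!)^2(2k−1)^{2n+1}) − 1. -/

import Mathlib

open MeasureTheory Real

/-- Density of the n-th value of the k-th record from a standard uniform parent. -/
noncomputable def recg (k n : ℕ) (x : ℝ) : ℝ :=
  (k : ℝ) ^ (n + 1) / (Nat.factorial n) * (-Real.log (1 - x)) ^ n * (1 - x) ^ (k - 1)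

lemma exp_map_Ioi : (fun t : ℝ => 1 - Real.exp (-t)) '' Set.Ioi 0 = Set.Ioo 0 1 := by
  ext x
  simp only [Set.mem_image, Set.mem_Ioi, Set.mem_Ioo]
  constructor
  · rintro ⟨t, ht, rfl⟩
    have h1 : Real.exp (-t) < 1 := by
      rw [Real.exp_lt_one_iff]
      linarith
    have h2 : 0 < Real.exp (-t) := Real.exp_pos _
    constructor <;> linarith
  · rintro ⟨h0, h1⟩
    refine ⟨-Real.log (1 - x), ?_, ?_⟩
    · have := Real.log_neg (x := 1 - x) (by linarith) (by linarith)
      linarith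
    · rw [neg_neg, Real.exp_log (by linarith)]
      ring

lemma hasDeriv_aux (t : ℝ) :
    HasDerivAt (fun t : ℝ => 1 - Real.exp (-t)) (Real.exp (-t)) t := by
  have h : HasDerivAt (fun t : ℝ => Real.exp (-t)) (-Real.exp (-t)) t := by
    simpa using (hasDerivAt_neg t).exp
  simpa using h.const_sub 1

lemma inj_aux : Set.InjOn (fun t : ℝ => 1 - Real.exp (-t)) (Set.Ioi 0) := by
  intro a _ b _ h
  simp only at h
  have h1 : Real.exp (-a) = Real.exp (-b) := by linarith
  have := Real.exp_injective h1
  linarith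

lemma change (h : ℝ → ℝ) :
    ∫ x in Set.Ioo (0:ℝ) 1, h x
      = ∫ t in Set.Ioi (0:ℝ), Real.exp (-t) * h (1 - Real.exp (-t)) := by
  rw [← exp_map_Ioi,
    integral_image_eq_integral_abs_deriv_smul measurableSet_Ioi
      (fun t _ => (hasDeriv_aux t).hasDerivWithinAt) inj_aux]
  refine setIntegral_congr_fun measurableSet_Ioi fun t _ => ?_
  rw [abs_of_pos (Real.exp_pos _), smul_eq_mul]

lemma change_int (h : ℝ → ℝ) :
    IntegrableOn h (Set.Ioo (0:ℝ) 1) ↔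
      IntegrableOn (fun t => Real.exp (-t) * h (1 - Real.exp (-t))) (Set.Ioi (0:ℝ)) := by
  have e : (fun x : ℝ => |Real.exp (-x)| • h (1 - Real.exp (-x)))
      = fun t => Real.exp (-t) * h (1 - Real.exp (-t)) := by
    funext t
    rw [abs_of_pos (Real.exp_pos _), smul_eq_mul]
  rw [← exp_map_Ioi,
    integrableOn_image_iff_integrableOn_abs_deriv_smul measurableSet_Ioi
      (fun t _ => (hasDeriv_aux t).hasDerivWithinAt) inj_aux, e]

lemma pt (m p : ℕ) (t : ℝ) :
    Real.exp (-t) * ((-Real.log (1 - (1 - Real.exp (-t)))) ^ m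
        * (1 - (1 - Real.exp (-t))) ^ p)
      = t ^ m * Real.exp (-(((p : ℝ) + 1) * t)) := by
  rw [sub_sub_cancel, Real.log_exp, neg_neg, ← Real.exp_nat_mul,
    show (-(((p : ℝ) + 1) * t)) = (p : ℝ) * -t + -t by ring, Real.exp_add]
  ring

lemma int_aux (m : ℕ) {c : ℝ} (hc : 0 < c) :
    IntegrableOn (fun t : ℝ => t ^ m * Real.exp (-(c * t))) (Set.Ioi 0) := by
  have h1 := Real.GammaIntegral_convergent (s := (m : ℝ) + 1) (by positivity)
  have h2 := (integrableOn_Ioi_comp_mul_left_iff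
      (fun x : ℝ => Real.exp (-x) * x ^ (((m : ℝ) + 1) - 1)) 0 hc).mpr (by simpa using h1)
  have h3 := h2.const_mul (c ^ m)⁻¹
  refine IntegrableOn.congr_fun h3 (fun t ht => ?_) measurableSet_Ioi
  show (c ^ m)⁻¹ * (Real.exp (-(c * t)) * (c * t) ^ (((m : ℝ) + 1) - 1))
      = t ^ m * Real.exp (-(c * t))
  have he : (((m : ℝ) + 1) - 1) = ((m : ℕ) : ℝ) := by push_cast; ring
  rw [he, Real.rpow_natCast, mul_pow]
  have hcm : (c : ℝ) ^ m ≠ 0 := by positivity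
  field_simp

lemma key_val (m p : ℕ) :
    ∫ x in Set.Ioo (0:ℝ) 1, (-Real.log (1 - x)) ^ m * (1 - x) ^ p
      = (Nat.factorial m : ℝ) / ((p : ℝ) + 1) ^ (m + 1) := by
  rw [change]
  rw [setIntegral_congr_fun (g := fun t : ℝ =>
      t ^ (((m : ℝ) + 1) - 1) * Real.exp (-(((p : ℝ) + 1) * t))) measurableSet_Ioi
      (fun t ht => ?_)]
  · rw [Real.integral_rpow_mul_exp_neg_mul_Ioi (by positivity) (by positivity),
      Real.Gamma_nat_eq_factorial,
      show ((m : ℝ) + 1) = ((m + 1 : ℕ) : ℝ) by push_cast; ring,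
      Real.rpow_natCast, div_pow, one_pow]
    ring
  · show Real.exp (-t) * ((-Real.log (1 - (1 - Real.exp (-t)))) ^ m
        * (1 - (1 - Real.exp (-t))) ^ p)
      = t ^ (((m : ℝ) + 1) - 1) * Real.exp (-(((p : ℝ) + 1) * t))
    rw [pt m p t, show (((m : ℝ) + 1) - 1) = ((m : ℕ) : ℝ) by push_cast; ring,
      Real.rpow_natCast]

lemma key_int (m p : ℕ) :
    IntegrableOn (fun x : ℝ => (-Real.log (1 - x)) ^ m * (1 - x) ^ p)
      (Set.Ioo (0:ℝ) 1) := by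
  rw [change_int]
  exact IntegrableOn.congr_fun (int_aux m (c := (p : ℝ) + 1) (by positivity))
    (fun t _ => (pt m p t).symm) measurableSet_Ioi

theorem stmt3 (k n : ℕ) (hk : 1 ≤ k) :
    ∫ x in (0:ℝ)..1, (recg k n x - 1) ^ 2 =
      (k : ℝ) ^ (2 * (n + 1)) * (Nat.factorial (2 * n)) /
        ((Nat.factorial n : ℝ) ^ 2 * (2 * (k : ℝ) - 1) ^ (2 * n + 1)) - 1 := by
  set C : ℝ := (k : ℝ) ^ (n + 1) / (Nat.factorial n) with hC
  have hexp : (fun x : ℝ => (recg k n x - 1) ^ 2)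
      = fun x => C ^ 2 * ((-Real.log (1 - x)) ^ (2 * n) * (1 - x) ^ (2 * (k - 1)))
          - 2 * (C * ((-Real.log (1 - x)) ^ n * (1 - x) ^ (k - 1))) + 1 := by
    funext x
    simp only [recg, hC]
    ring
  have i1 : IntegrableOn (fun x : ℝ =>
      C ^ 2 * ((-Real.log (1 - x)) ^ (2 * n) * (1 - x) ^ (2 * (k - 1))))
      (Set.Ioo (0:ℝ) 1) := (key_int (2 * n) (2 * (k - 1))).const_mul _
  have i2 : IntegrableOn (fun x : ℝ =>
      2 * (C * ((-Real.log (1 - x)) ^ n * (1 - x) ^ (k - 1)))) (Set.Ioo (0:ℝ) 1) := by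
    exact ((key_int n (k - 1)).const_mul C).const_mul 2
  have i3 : IntegrableOn (fun _ : ℝ => (1:ℝ)) (Set.Ioo (0:ℝ) 1) := by
    apply integrableOn_const (by simp [Real.volume_Ioo])
  have i12 : IntegrableOn (fun x : ℝ =>
      C ^ 2 * ((-Real.log (1 - x)) ^ (2 * n) * (1 - x) ^ (2 * (k - 1)))
        - 2 * (C * ((-Real.log (1 - x)) ^ n * (1 - x) ^ (k - 1)))) (Set.Ioo (0:ℝ) 1) :=
    i1.sub i2
  rw [intervalIntegral.integral_of_le (by norm_num : (0:ℝ) ≤ 1),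
    MeasureTheory.integral_Ioc_eq_integral_Ioo, hexp,
    MeasureTheory.integral_add i12 i3,
    MeasureTheory.integral_sub i1 i2,
    MeasureTheory.integral_const_mul, MeasureTheory.integral_const_mul,
    MeasureTheory.integral_const_mul, key_val, key_val]
  have hcast1 : ((k - 1 : ℕ) : ℝ) + 1 = (k : ℝ) := by
    rw [Nat.cast_sub hk]
    push_cast
    ring
  have hcast2 : ((2 * (k - 1) : ℕ) : ℝ) + 1 = 2 * (k : ℝ) - 1 := by
    rw [Nat.cast_mul, Nat.cast_sub hk]
    push_cast
    ring
  rw [hcast1, hcast2]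
  have h1 : (volume (Set.Ioo (0:ℝ) 1)).toReal = 1 := by
    simp [Real.volume_Ioo]
  rw [MeasureTheory.setIntegral_const, Measure.real, h1, smul_eq_mul, one_mul]
  have hfact : (Nat.factorial n : ℝ) ≠ 0 := Nat.cast_ne_zero.mpr (Nat.factorial_ne_zero n)
  have hkpos : (0:ℝ) < (k : ℝ) := by exact_mod_cast hk
  have hkpow : (k : ℝ) ^ (n + 1) ≠ 0 := by positivity
  have h2k : (0:ℝ) < 2 * (k : ℝ) - 1 := by
    have : (1:ℝ) ≤ (k : ℝ) := by exact_mod_cast hk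
    linarith
  have h2kpow : (2 * (k : ℝ) - 1) ^ (2 * n + 1) ≠ 0 := by positivity
  rw [hC]
  field_simp
  ring
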